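/- Let F be an algebraically closed field, n > 1 an integer, and γ ∈ F. Consider the equation x^n = γ·1 + u₁ in the split octonion algebra O over F. If the image of n in F is nonzero and γ ≠ 0, then x is a solution if and only if there exists ξ₁ ∈ F with ξ₁^n = γ and x = ξ₁·1 + (ξ₁/(nγ))·u₁. If the image of n in F is zero or γ = 0, then the equation has no solution. -/

import Mathlib

noncomputable section

/-- The split octonion algebra over `F`, given by Zorn vector matrices
`(x1, u; v, x2)` with `x1, x2 ∈ F` and `u, v ∈ F³`. -/
@[ext]
structure SplitOctonion (F : Type*) where
  x1 : F
  u : Fin 3 → F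
  v : Fin 3 → F
  x2 : F

namespace SplitOctonion

variable {F : Type*} [Field F]

/-- Dot product on `F³`. -/
def dot (x y : Fin 3 → F) : F := x 0 * y 0 + x 1 * y 1 + x 2 * y 2

/-- Cross product on `F³`. -/
def cross (x y : Fin 3 → F) : Fin 3 → F :=
  ![x 1 * y 2 - x 2 * y 1, x 2 * y 0 - x 0 * y 2, x 0 * y 1 - x 1 * y 0]

instance : Zero (SplitOctonion F) := ⟨⟨0, 0, 0, 0⟩⟩
instance : One (SplitOctonion F) := ⟨⟨1, 0, 0, 1⟩⟩
instance : Add (SplitOctonion F) :=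
  ⟨fun x y => ⟨x.x1 + y.x1, x.u + y.u, x.v + y.v, x.x2 + y.x2⟩⟩
instance : Neg (SplitOctonion F) := ⟨fun x => ⟨-x.x1, -x.u, -x.v, -x.x2⟩⟩
instance : SMul F (SplitOctonion F) :=
  ⟨fun c x => ⟨c * x.x1, c • x.u, c • x.v, c * x.x2⟩⟩

/-- Zorn vector matrix multiplication. -/
instance : Mul (SplitOctonion F) :=
  ⟨fun x y => ⟨x.x1 * y.x1 + dot x.u y.v,
    x.x1 • y.u + y.x2 • x.u - cross x.v y.v,
    y.x1 • x.v + x.x2 • y.v + cross x.u y.u,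
    x.x2 * y.x2 + dot x.v y.u⟩⟩

@[simp] lemma zero_x1 : (0 : SplitOctonion F).x1 = 0 := rfl
@[simp] lemma zero_u : (0 : SplitOctonion F).u = 0 := rfl
@[simp] lemma zero_v : (0 : SplitOctonion F).v = 0 := rfl
@[simp] lemma zero_x2 : (0 : SplitOctonion F).x2 = 0 := rfl
@[simp] lemma add_x1 (x y : SplitOctonion F) : (x + y).x1 = x.x1 + y.x1 := rfl
@[simp] lemma add_u (x y : SplitOctonion F) : (x + y).u = x.u + y.u := rfl
@[simp] lemma add_v (x y : SplitOctonion F) : (x + y).v = x.v + y.v := rfl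
@[simp] lemma add_x2 (x y : SplitOctonion F) : (x + y).x2 = x.x2 + y.x2 := rfl
@[simp] lemma neg_x1 (x : SplitOctonion F) : (-x).x1 = -x.x1 := rfl
@[simp] lemma neg_u (x : SplitOctonion F) : (-x).u = -x.u := rfl
@[simp] lemma neg_v (x : SplitOctonion F) : (-x).v = -x.v := rfl
@[simp] lemma neg_x2 (x : SplitOctonion F) : (-x).x2 = -x.x2 := rfl
@[simp] lemma smul_x1 (c : F) (x : SplitOctonion F) : (c • x).x1 = c * x.x1 := rfl
@[simp] lemma smul_u (c : F) (x : SplitOctonion F) : (c • x).u = c • x.u := rfl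
@[simp] lemma smul_v (c : F) (x : SplitOctonion F) : (c • x).v = c • x.v := rfl
@[simp] lemma smul_x2 (c : F) (x : SplitOctonion F) : (c • x).x2 = c * x.x2 := rfl

instance : AddCommGroup (SplitOctonion F) where
  add_assoc x y z := by ext <;> simp [add_assoc]
  zero_add x := by ext <;> simp
  add_zero x := by ext <;> simp
  add_comm x y := by ext <;> simp [add_comm]
  neg_add_cancel x := by ext <;> simp
  nsmul := nsmulRec
  zsmul := zsmulRec

instance : Module F (SplitOctonion F) where
  one_smul x := by ext <;> simp
  mul_smul c d x := by ext <;> simp [mul_assoc, mul_smul]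
  smul_zero c := by ext <;> simp
  smul_add c x y := by ext <;> simp [mul_add, smul_add]
  add_smul c d x := by ext <;> simp [add_mul, add_smul]
  zero_smul x := by ext <;> simp

/-- Powers of a single octonion (well defined by power-associativity). -/
def npow (x : SplitOctonion F) : ℕ → SplitOctonion F
  | 0 => 1
  | n + 1 => npow x n * x

instance : Pow (SplitOctonion F) ℕ := ⟨npow⟩

/-- Substitution of an octonion into a polynomial over `F`:
`f(x) = αₙ xⁿ + ⋯ + α₁ x + α₀ • 1`. -/
def peval (f : Polynomial F) (x : SplitOctonion F) : SplitOctonion F :=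
  f.sum fun i c => c • x ^ i

/-- The octonion `e₁`. -/
def e1 : SplitOctonion F := ⟨1, 0, 0, 0⟩
/-- The octonion `e₂`. -/
def e2 : SplitOctonion F := ⟨0, 0, 0, 1⟩
/-- The octonion `u₁`. -/
def u1 : SplitOctonion F := ⟨0, ![1, 0, 0], 0, 0⟩

/-- Conjugation on `O`. -/
def conj (x : SplitOctonion F) : SplitOctonion F := ⟨x.x2, -x.u, -x.v, x.x1⟩

/-- The norm of an octonion. -/
def normO (x : SplitOctonion F) : F := x.x1 * x.x2 - dot x.u x.v

/-- The trace of an octonion. -/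
def trO (x : SplitOctonion F) : F := x.x1 + x.x2

/-- `g` is an `F`-algebra automorphism of `O`: a linear bijection preserving
multiplication (and the unit). -/
def IsAlgAut (g : SplitOctonion F ≃ₗ[F] SplitOctonion F) : Prop :=
  g 1 = 1 ∧ ∀ x y, g (x * y) = g x * g y

end SplitOctonion


namespace SplitOctonion

variable {F : Type*} [Field F]

@[simp] lemma one_x1' : (1 : SplitOctonion F).x1 = 1 := rfl
@[simp] lemma one_u' : (1 : SplitOctonion F).u = 0 := rfl
@[simp] lemma one_v' : (1 : SplitOctonion F).v = 0 := rfl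
@[simp] lemma one_x2' : (1 : SplitOctonion F).x2 = 1 := rfl
@[simp] lemma mul_x1' (x y : SplitOctonion F) :
    (x * y).x1 = x.x1 * y.x1 + dot x.u y.v := rfl
@[simp] lemma mul_u' (x y : SplitOctonion F) :
    (x * y).u = x.x1 • y.u + y.x2 • x.u - cross x.v y.v := rfl
@[simp] lemma mul_v' (x y : SplitOctonion F) :
    (x * y).v = y.x1 • x.v + x.x2 • y.v + cross x.u y.u := rfl
@[simp] lemma mul_x2' (x y : SplitOctonion F) :
    (x * y).x2 = x.x2 * y.x2 + dot x.v y.u := rfl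

lemma pow_zero'' (x : SplitOctonion F) : x ^ 0 = 1 := rfl
lemma pow_succ'' (x : SplitOctonion F) (k : ℕ) : x ^ (k + 1) = x ^ k * x := rfl

/-- Every power is a linear combination of `x` and `1`. -/
lemma exists_pow_eq (x : SplitOctonion F) (k : ℕ) :
    ∃ p q : F, x ^ k = p • x + q • (1 : SplitOctonion F) := by
  induction k with
  | zero => exact ⟨0, 1, by ext <;> simp [pow_zero'']⟩
  | succ k ih =>
    obtain ⟨p, q, h⟩ := ih
    refine ⟨p * (x.x1 + x.x2) + q, -(p * (x.x1 * x.x2 - dot x.u x.v)), ?_⟩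
    rw [pow_succ'', h]
    ext i
    · simp [dot]; ring
    · fin_cases i <;> simp [dot, cross] <;> ring
    · fin_cases i <;> simp [dot, cross] <;> ring
    · simp [dot]; ring

/-- Power formula for `⟨α, w, 0, α⟩`. -/
lemma pow_diag (α : F) (w : Fin 3 → F) (k : ℕ) (hk : 1 ≤ k) :
    (⟨α, w, 0, α⟩ : SplitOctonion F) ^ k =
      ⟨α ^ k, ((k : F) * α ^ (k - 1)) • w, 0, α ^ k⟩ := by
  induction k, hk using Nat.le_induction with
  | base =>
    ext i
    · simp [pow_succ'', pow_zero'', dot]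
    · fin_cases i <;> simp [pow_succ'', pow_zero'', dot, cross]
    · fin_cases i <;> simp [pow_succ'', pow_zero'', dot, cross]
    · simp [pow_succ'', pow_zero'', dot]
  | succ k hk ih =>
    rw [pow_succ'', ih]
    have h1 : α ^ (k - 1) * α = α ^ k := by
      rw [← pow_succ]
      congr 1
      omega
    ext i
    · simp [dot]; ring
    · fin_cases i
      · simp [dot, cross, Nat.add_sub_cancel, pow_succ]
        linear_combination (k : F) * w 0 * h1
      · simp [dot, cross, Nat.add_sub_cancel, pow_succ]
        linear_combination (k : F) * w 1 * h1
      · simp [dot, cross, Nat.add_sub_cancel, pow_succ]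
        linear_combination (k : F) * w 2 * h1
    · fin_cases i <;> simp [dot, cross] <;> ring
    · simp [dot]; ring

lemma key (n : ℕ) (hn : 1 < n) (γ : F) (x : SplitOctonion F)
    (h : x ^ n = γ • (1 : SplitOctonion F) + u1) :
    x.x1 ^ n = γ ∧ x.v = 0 ∧ x.x2 = x.x1 ∧
      (((n : F) * x.x1 ^ (n - 1)) • x.u = ![1, 0, 0]) := by
  obtain ⟨p, q, hpq⟩ := exists_pow_eq x n
  rw [hpq] at h
  have hu : p • x.u = ![1, 0, 0] := by
    have := congrArg SplitOctonion.u h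
    simpa [u1] using this
  have hp : p ≠ 0 := by
    intro hp0
    have := congrFun hu 0
    simp [hp0] at this
  have hv : x.v = 0 := by
    have h2 := congrArg SplitOctonion.v h
    simp [u1] at h2
    rcases h2 with h2 | h2
    · exact absurd h2 hp
    · exact h2
  have hx12 : x.x2 = x.x1 := by
    have h1 := congrArg SplitOctonion.x1 h
    have h2 := congrArg SplitOctonion.x2 h
    simp [u1] at h1 h2
    have : p * x.x2 = p * x.x1 := by linear_combination h2 - h1
    exact mul_left_cancel₀ hp this
  have hxform : x = ⟨x.x1, x.u, 0, x.x1⟩ := by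
    ext <;> simp [hv, hx12]
  have hpow := pow_diag x.x1 x.u n (le_of_lt hn)
  rw [← hxform] at hpow
  rw [hpq] at hpow
  have hX1 : x.x1 ^ n = γ := by
    have := congrArg SplitOctonion.x1 hpow.symm
    have h1 := congrArg SplitOctonion.x1 h
    simp [u1] at this h1
    linear_combination this + h1
  have hU : ((n : F) * x.x1 ^ (n - 1)) • x.u = ![1, 0, 0] := by
    have h3 := congrArg SplitOctonion.u hpow
    simp at h3
    rw [← h3]
    exact hu
  exact ⟨hX1, hv, hx12, hU⟩

end SplitOctonion

open SplitOctonion in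
/-- the `n`-th roots of `γ·1 + u₁`. -/
theorem pow_eq_smul_one_add_u1_iff {F : Type*} [Field F] [IsAlgClosed F]
    (n : ℕ) (hn : 1 < n) (γ : F) :
    ((n : F) ≠ 0 ∧ γ ≠ 0 →
      ∀ x : SplitOctonion F,
        x ^ n = γ • (1 : SplitOctonion F) + u1 ↔
          ∃ ξ₁ : F, ξ₁ ^ n = γ ∧
            x = ξ₁ • (1 : SplitOctonion F) + (ξ₁ / ((n : F) * γ)) • u1) ∧
    ((n : F) = 0 ∨ γ = 0 →
      ∀ x : SplitOctonion F, x ^ n ≠ γ • (1 : SplitOctonion F) + u1) := by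
  constructor
  · rintro ⟨hnF, hγ⟩ x
    constructor
    · intro h
      obtain ⟨h1, hv, h12, hu⟩ := SplitOctonion.key n hn γ x h
      set α := x.x1 with hα
      have hα0 : α ≠ 0 := by
        intro h0
        rw [h0, zero_pow (by omega)] at h1
        exact hγ h1.symm
      have hαα : α * α ^ (n - 1) = α ^ n := by
        rw [← pow_succ']
        congr 1
        omega
      have hc : (n : F) * α ^ (n - 1) ≠ 0 :=
        mul_ne_zero hnF (pow_ne_zero _ hα0)
      refine ⟨α, h1, ?_⟩
      have hcoef : (α / ((n : F) * γ)) * ((n : F) * α ^ (n - 1)) = 1 := by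
        rw [← h1]
        field_simp
        linear_combination hαα
      have hxu : x.u = (α / ((n : F) * γ)) • ![1, 0, 0] := by
        rw [← hu, smul_smul, hcoef, one_smul]
      ext i
      · simp [SplitOctonion.u1, hα]
      · rw [hxu]; fin_cases i <;> simp [SplitOctonion.u1]
      · rw [hv]; fin_cases i <;> simp [SplitOctonion.u1]
      · simp [h12, SplitOctonion.u1]
    · rintro ⟨ξ, hξ, rfl⟩
      have hξ0 : ξ ≠ 0 := by
        intro h0; rw [h0, zero_pow (by omega)] at hξ; exact hγ hξ.symm
      have hform : ξ • (1 : SplitOctonion F) + (ξ / ((n : F) * γ)) • SplitOctonion.u1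
          = ⟨ξ, (ξ / ((n : F) * γ)) • ![1, 0, 0], 0, ξ⟩ := by
        ext i
        · simp [SplitOctonion.u1]
        · fin_cases i <;> simp [SplitOctonion.u1]
        · fin_cases i <;> simp [SplitOctonion.u1]
        · simp [SplitOctonion.u1]
      rw [hform, SplitOctonion.pow_diag ξ _ n (le_of_lt hn)]
      have hξξ : ξ * ξ ^ (n - 1) = ξ ^ n := by
        rw [← pow_succ']
        congr 1
        omega
      have hcoef : ((n : F) * ξ ^ (n - 1)) * (ξ / ((n : F) * γ)) = 1 := by
        rw [← hξ]
        field_simp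
        linear_combination hξξ
      ext i
      · simp [hξ, SplitOctonion.u1]
      · rw [smul_smul, hcoef]; fin_cases i <;> simp [SplitOctonion.u1]
      · fin_cases i <;> simp [SplitOctonion.u1]
      · simp [hξ, SplitOctonion.u1]
  · intro hcase x h
    obtain ⟨h1, hv, h12, hu⟩ := SplitOctonion.key n hn γ x h
    have hc0 : (n : F) * x.x1 ^ (n - 1) = 0 := by
      rcases hcase with hn0 | hγ0
      · rw [hn0, zero_mul]
      · have : x.x1 = 0 := by
          have := h1; rw [hγ0] at this
          exact pow_eq_zero_iff (by omega) |>.mp this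
        rw [this, zero_pow (by omega), mul_zero]
    have := congrFun hu 0
    rw [hc0] at this
    simp at this
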